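/- Let G = (V, E) be a finite simple undirected graph, let k ∈ ℕ, and let e = (u, v) be an edge joining two non-adjacent vertices of G with u ∈ V(C_k(G)) and v ∈ V(C_k(G)). Then e has no followers: V(C_k(G + e)) = V(C_k(G)). -/
import Mathlib


open SimpleGraph

variable {V : Type*}

/-- The vertex set of the `k`-core of `G`: the largest set `S` such that every
vertex of `S` has at least `k` neighbors in `S` (realized as the union of all
such sets). -/
def coreSet (G : SimpleGraph V) (k : ℕ) : Set V :=
  {u | ∃ S : Set V, u ∈ S ∧ ∀ v ∈ S, k ≤ (S ∩ G.neighborSet v).ncard}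

/-- The followers of a set `A` of anchor edges: vertices of the `k`-core of `G + A`
that are not in the `k`-core of `G`. -/
def followers (G : SimpleGraph V) (k : ℕ) (A : Set (Sym2 V)) : Set V :=
  coreSet (G ⊔ SimpleGraph.fromEdgeSet A) k \ coreSet G k

lemma coreSet_good [Finite V] (G : SimpleGraph V) (k : ℕ) :
    ∀ w ∈ coreSet G k, k ≤ (coreSet G k ∩ G.neighborSet w).ncard := by
  intro w hw
  obtain ⟨S, hwS, hS⟩ := hw
  have hsub : S ⊆ coreSet G k := fun x hx => ⟨S, hx, hS⟩
  calc k ≤ (S ∩ G.neighborSet w).ncard := hS w hwS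
    _ ≤ _ := Set.ncard_le_ncard (Set.inter_subset_inter_left _ hsub) (Set.toFinite _)

/-- If both endpoints of the added edge `e = (u, v)` (joining non-adjacent vertices)
already lie in the `k`-core of `G`, then `e` has no followers: the `k`-core vertex
set is unchanged. -/
theorem stmt_3 [Fintype V] (G : SimpleGraph V) (k : ℕ)
    (u v : V) (huv : u ≠ v) (hadj : ¬ G.Adj u v)
    (hu : u ∈ coreSet G k) (hv : v ∈ coreSet G k) :
    coreSet (G ⊔ SimpleGraph.fromEdgeSet {s(u, v)}) k = coreSet G k := by
  set G' := G ⊔ SimpleGraph.fromEdgeSet {s(u, v)} with hG'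
  apply Set.Subset.antisymm
  · intro x hx
    set S : Set V := coreSet G' k ∪ coreSet G k with hSdef
    refine ⟨S, Or.inl hx, ?_⟩
    intro w hw
    by_cases hwc : w ∈ coreSet G k
    · calc k ≤ (coreSet G k ∩ G.neighborSet w).ncard := coreSet_good G k w hwc
        _ ≤ _ := Set.ncard_le_ncard
          (Set.inter_subset_inter_left _ Set.subset_union_right) (Set.toFinite _)
    · have hw' : w ∈ coreSet G' k := hw.resolve_right hwc
      have hwu : w ≠ u := fun h => hwc (h ▸ hu)
      have hwv : w ≠ v := fun h => hwc (h ▸ hv)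
      have hnb : G'.neighborSet w = G.neighborSet w := by
        ext a
        simp only [SimpleGraph.mem_neighborSet, hG', SimpleGraph.sup_adj,
          SimpleGraph.fromEdgeSet_adj, Set.mem_singleton_iff, Sym2.eq_iff]
        constructor
        · rintro (h | ⟨(⟨h1, h2⟩ | ⟨h1, h2⟩), _⟩)
          · exact h
          · exact absurd h1 hwu
          · exact absurd h1 hwv
        · exact fun h => Or.inl h
      calc k ≤ (coreSet G' k ∩ G'.neighborSet w).ncard := coreSet_good G' k w hw'
        _ = (coreSet G' k ∩ G.neighborSet w).ncard := by rw [hnb]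
        _ ≤ _ := Set.ncard_le_ncard
          (Set.inter_subset_inter_left _ Set.subset_union_left) (Set.toFinite _)
  · rintro x ⟨S, hxS, hS⟩
    refine ⟨S, hxS, fun w hw => le_trans (hS w hw) ?_⟩
    apply Set.ncard_le_ncard _ (Set.toFinite _)
    apply Set.inter_subset_inter_right
    intro a ha
    exact Or.inl ha
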